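/- Given a graph G, a total order on V making V = {1,…,n}, and a fractional solution x of the LP relaxation of the representatives formulation for vertex coloring (satisfying Σ_{u ∈ N̄⁻[v]} x_{uv} ≥ 1 for all v, and Σ_{u∈K} x_{vu} ≤ x_{vv} for cliques K in N̄⁺(v), x ≥ 0), the assignment defined by ỹ_k := x_{kk} for all k ∈ V and x̃_{vk} := x_{kv} for all v ∈ V, k ∈ N̄⁻[v] (and x̃_{vk} := 0 otherwise) is feasible for the LP relaxation of the assignment formulation of vertex coloring and has the same objective value Σ_k ỹ_k = Σ_v x_{vv}. Consequently, the LP bound of the representatives formulation for vertex coloring is at least that of the assignment formulation. -/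

import Mathlib

open scoped Classical

/-- Feasible value set of the LP relaxation of the assignment formulation for
vertex coloring (colors indexed by the vertices, objective `Σ_k ỹ_k`). -/
noncomputable def colAssignLPset (n : ℕ) (G : SimpleGraph (Fin n)) : Set ℝ :=
  {val | ∃ (tx : Fin n → Fin n → ℝ) (ty : Fin n → ℝ),
    (∀ v k, 0 ≤ tx v k) ∧ (∀ k, 0 ≤ ty k) ∧
    (∀ v, 1 ≤ ∑ k, tx v k) ∧
    (∀ u v k, G.Adj u v → tx u k + tx v k ≤ ty k) ∧
    val = ∑ k, ty k}

/-- Feasible value set of the LP relaxation of the representatives formulation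
for vertex coloring (objective `Σ_v x_{vv}`), w.r.t. the natural order on `Fin n`. -/
noncomputable def colRepLPset (n : ℕ) (G : SimpleGraph (Fin n)) : Set ℝ :=
  {val | ∃ x : Fin n → Fin n → ℝ,
    (∀ u v, 0 ≤ x u v) ∧
    (∀ v, 1 ≤ x v v + ∑ u ∈ Finset.univ.filter (fun u => u < v ∧ ¬ G.Adj u v), x u v) ∧
    (∀ v (K : Finset (Fin n)), (∀ u ∈ K, v < u ∧ ¬ G.Adj v u) →
        (∀ a ∈ K, ∀ b ∈ K, a ≠ b → G.Adj a b) → ∑ u ∈ K, x v u ≤ x v v) ∧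
    val = ∑ v, x v v}

/-- From a fractional solution `x` of the representatives LP for vertex coloring,
the assignment `ỹ_k = x_{kk}`, `x̃_{vk} = x_{kv}` for `k ∈ N̄⁻[v]` (and `0`
otherwise) is feasible for the assignment LP for vertex coloring, with the same
objective value; consequently the representatives LP bound dominates the
assignment LP bound. -/
lemma key17 (n : ℕ) (G : SimpleGraph (Fin n))
    (x : Fin n → Fin n → ℝ)
    (hnn : ∀ u v, 0 ≤ x u v)
    (hcover : ∀ v, 1 ≤ x v v +
        ∑ u ∈ Finset.univ.filter (fun u => u < v ∧ ¬ G.Adj u v), x u v)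
    (hclq : ∀ v (K : Finset (Fin n)), (∀ u ∈ K, v < u ∧ ¬ G.Adj v u) →
        (∀ a ∈ K, ∀ b ∈ K, a ≠ b → G.Adj a b) → ∑ u ∈ K, x v u ≤ x v v)
    (ty : Fin n → ℝ) (hty : ∀ k, ty k = x k k)
    (tx : Fin n → Fin n → ℝ)
    (htx : ∀ v k, tx v k = if k ≤ v ∧ (k = v ∨ ¬ G.Adj k v) then x k v else 0) :
    (∀ v k, 0 ≤ tx v k) ∧ (∀ k, 0 ≤ ty k) ∧
     (∀ v, 1 ≤ ∑ k, tx v k) ∧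
     (∀ u v k, G.Adj u v → tx u k + tx v k ≤ ty k) ∧
     (∑ k, ty k = ∑ v, x v v) := by
  have hsingle : ∀ k w : Fin n, k ≤ w → (k = w ∨ ¬ G.Adj k w) → x k w ≤ x k k := by
    intro k w hle hor
    rcases eq_or_lt_of_le hle with rfl | hlt
    · exact le_refl _
    · have hna : ¬ G.Adj k w := by
        rcases hor with rfl | h
        · exact absurd rfl (ne_of_lt hlt)
        · exact h
      have := hclq k {w} (by intro u hu; simp at hu; subst hu; exact ⟨hlt, hna⟩)
        (by intro a ha b hb hab; simp at ha hb; subst ha; subst hb; exact absurd rfl hab)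
      simpa using this
  refine ⟨?_, ?_, ?_, ?_, ?_⟩
  · intro v k; rw [htx]; split
    · exact hnn _ _
    · exact le_refl _
  · intro k; rw [hty]; exact hnn _ _
  · intro v
    have hsum : ∑ k, tx v k = x v v +
        ∑ u ∈ Finset.univ.filter (fun u => u < v ∧ ¬ G.Adj u v), x u v := by
      have h1 : ∑ k, tx v k =
          ∑ k ∈ Finset.univ.filter (fun k => k ≤ v ∧ (k = v ∨ ¬ G.Adj k v)), x k v := by
        rw [Finset.sum_filter]
        exact Finset.sum_congr rfl (fun k _ => htx v k)
      have h2 : Finset.univ.filter (fun k : Fin n => k ≤ v ∧ (k = v ∨ ¬ G.Adj k v)) =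
          insert v (Finset.univ.filter (fun u => u < v ∧ ¬ G.Adj u v)) := by
        ext k
        simp only [Finset.mem_filter, Finset.mem_univ, true_and, Finset.mem_insert]
        constructor
        · rintro ⟨hle, rfl | hna⟩
          · exact Or.inl rfl
          · rcases eq_or_lt_of_le hle with rfl | hlt
            · exact Or.inl rfl
            · exact Or.inr ⟨hlt, hna⟩
        · rintro (rfl | ⟨hlt, hna⟩)
          · exact ⟨le_refl _, Or.inl rfl⟩
          · exact ⟨le_of_lt hlt, Or.inr hna⟩
      rw [h1, h2, Finset.sum_insert (by simp)]
    rw [hsum]; exact hcover v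
  · intro u v k hadj
    rw [htx, htx, hty]
    by_cases h1 : k ≤ u ∧ (k = u ∨ ¬ G.Adj k u)
    · by_cases h2 : k ≤ v ∧ (k = v ∨ ¬ G.Adj k v)
      · simp only [h1, h2, if_true]
        -- both nonzero: k ≠ u, k ≠ v
        have hku : k ≠ u := by
          rintro rfl
          rcases h2.2 with rfl | hna
          · exact G.irrefl hadj
          · exact hna hadj
        have hkv : k ≠ v := by
          rintro rfl
          rcases h1.2 with rfl | hna
          · exact G.irrefl hadj
          · exact hna (G.adj_symm hadj)
        have hnau : ¬ G.Adj k u := by rcases h1.2 with rfl | h; exact absurd rfl hku; exact h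
        have hnav : ¬ G.Adj k v := by rcases h2.2 with rfl | h; exact absurd rfl hkv; exact h
        have huv : u ≠ v := G.ne_of_adj hadj
        have := hclq k {u, v}
          (by intro w hw; simp at hw
              rcases hw with rfl | rfl
              · exact ⟨lt_of_le_of_ne h1.1 hku, hnau⟩
              · exact ⟨lt_of_le_of_ne h2.1 hkv, hnav⟩)
          (by intro a ha b hb hab; simp at ha hb
              rcases ha with rfl | rfl <;> rcases hb with rfl | rfl
              · exact absurd rfl hab
              · exact hadj
              · exact G.adj_symm hadj
              · exact absurd rfl hab)
        rwa [Finset.sum_pair huv] at this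
      · simp only [h1, h2, if_true, if_false, add_zero]
        exact hsingle k u h1.1 h1.2
    · simp only [h1, if_false, zero_add]
      by_cases h2 : k ≤ v ∧ (k = v ∨ ¬ G.Adj k v)
      · simp only [h2, if_true]; exact hsingle k v h2.1 h2.2
      · simp only [h2, if_false]; exact hnn _ _
  · exact Finset.sum_congr rfl (fun k _ => hty k)

theorem stmt17 (n : ℕ) (G : SimpleGraph (Fin n))
    (x : Fin n → Fin n → ℝ)
    (hnn : ∀ u v, 0 ≤ x u v)
    (hcover : ∀ v, 1 ≤ x v v +
        ∑ u ∈ Finset.univ.filter (fun u => u < v ∧ ¬ G.Adj u v), x u v)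
    (hclq : ∀ v (K : Finset (Fin n)), (∀ u ∈ K, v < u ∧ ¬ G.Adj v u) →
        (∀ a ∈ K, ∀ b ∈ K, a ≠ b → G.Adj a b) → ∑ u ∈ K, x v u ≤ x v v)
    (ty : Fin n → ℝ) (hty : ∀ k, ty k = x k k)
    (tx : Fin n → Fin n → ℝ)
    (htx : ∀ v k, tx v k = if k ≤ v ∧ (k = v ∨ ¬ G.Adj k v) then x k v else 0) :
    ((∀ v k, 0 ≤ tx v k) ∧ (∀ k, 0 ≤ ty k) ∧
     (∀ v, 1 ≤ ∑ k, tx v k) ∧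
     (∀ u v k, G.Adj u v → tx u k + tx v k ≤ ty k) ∧
     (∑ k, ty k = ∑ v, x v v)) ∧
    sInf (colAssignLPset n G) ≤ sInf (colRepLPset n G) := by
  refine ⟨key17 n G x hnn hcover hclq ty hty tx htx, ?_⟩
  have hsub : colRepLPset n G ⊆ colAssignLPset n G := by
    rintro val ⟨x', h1, h2, h3, rfl⟩
    refine ⟨fun v k => if k ≤ v ∧ (k = v ∨ ¬ G.Adj k v) then x' k v else 0,
      fun k => x' k k, ?_⟩
    obtain ⟨a, b, c, d, e⟩ := key17 n G x' h1 h2 h3 _ (fun _ => rfl) _ (fun _ _ => rfl)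
    exact ⟨a, b, c, d, e.symm⟩
  have hne : (colRepLPset n G).Nonempty := by
    refine ⟨(n : ℝ), fun u v => if u = v then 1 else 0, ?_, ?_, ?_, ?_⟩
    · intro u v; dsimp only; split <;> norm_num
    · intro v; simp
    · intro v K hK _
      have : ∀ u ∈ K, (if v = u then (1:ℝ) else 0) = 0 := by
        intro u hu
        simp [ne_of_lt (hK u hu).1]
      rw [Finset.sum_congr rfl this]
      simp
    · simp
  have hbdd : BddBelow (colAssignLPset n G) := by
    refine ⟨0, ?_⟩
    rintro val ⟨tx', ty', _, hy, _, _, rfl⟩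
    exact Finset.sum_nonneg (fun k _ => hy k)
  exact csInf_le_csInf hbdd hne hsub
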